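/- arXiv:math/0510353 — 2 statements merged into one kernel-verified Lean document; each statement's English description precedes it below -/
import Mathlib

section
/- Let G be a group and let A, B, C be subgroups of G with A ⊆ C. If the set of double cosets BgA (g ∈ G) is finite, then the set of double cosets (B ∩ C)cA with c ∈ C (double cosets of the subgroups B ∩ C and A inside the group C) is also finite. -/
/-- **Proposition 2.6(1)** Let `G` be a group and `A, B, C` subgroups with `A ⊆ C`.
If `|B \ G / A| < ∞` then `|(B ∩ C) \ C / A| < ∞`. -/
theorem finite_double_cosets_restrict
    (G : Type) [Group G] (A B C : Subgroup G) (hAC : A ≤ C)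
    (h : Finite (DoubleCoset.Quotient (B : Set G) (A : Set G))) :
    Finite (DoubleCoset.Quotient (((B ⊓ C).subgroupOf C : Subgroup C) : Set C)
      ((A.subgroupOf C : Subgroup C) : Set C)) := by
  let f : DoubleCoset.Quotient (((B ⊓ C).subgroupOf C : Subgroup C) : Set C)
      ((A.subgroupOf C : Subgroup C) : Set C) → DoubleCoset.Quotient (B : Set G) (A : Set G) :=
    Quotient.lift (fun c : C => DoubleCoset.mk B A (c : G)) (by
      rintro x y hxy
      obtain ⟨b, hb, a, ha, hy⟩ := DoubleCoset.rel_iff.mp hxy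
      apply (DoubleCoset.eq B A x y).mpr
      refine ⟨b, hb.1, a, ha, ?_⟩
      exact_mod_cast congrArg (Subtype.val) hy)
  have hf : Function.Injective f := by
    rintro ⟨x⟩ ⟨y⟩ hxy
    obtain ⟨b, hb, a, ha, hy⟩ := (DoubleCoset.eq B A x y).mp hxy
    apply Quotient.sound
    apply DoubleCoset.rel_iff.mpr
    have haC : (a : G) ∈ C := hAC ha
    have hbC : (b : G) ∈ C := by
      have : (b : G) = (y : G) * a⁻¹ * (x : G)⁻¹ := by
        rw [hy]; group
      rw [this]
      exact C.mul_mem (C.mul_mem y.2 (C.inv_mem haC)) (C.inv_mem x.2)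
    refine ⟨⟨b, hbC⟩, ⟨hb, hbC⟩, ⟨a, haC⟩, ha, ?_⟩
    ext
    exact hy
  exact Finite.of_injective f hf
end

section
/- Let Γ = G∗_C be an HNN extension with associated subgroup C and stable letter t, and let M be a ℚΓ-module on which t acts trivially. Then H₁(Γ, M) contains a subgroup that admits a surjective ℚ-linear map onto H₀(C, M), the module of C-coinvariants of M. -/
open CategoryTheory

/-- A *limit group*: a finitely generated group `G` such that for every finite subset
`T` of `G` there is a homomorphism from `G` to a free group that is injective on `T`. -/
def IsLimitGroup (G : Type) [Group G] : Prop :=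
  Group.FG G ∧
    ∀ T : Finset G, ∃ (ι : Type) (f : G →* FreeGroup ι), Set.InjOn f ↑T

/-- A group `G` is of type `FPₙ(ℚ)` if the trivial `ℚG`-module `ℚ` admits a projective
resolution by `ℚG`-modules that is finitely generated in all dimensions `≤ n`. -/
def IsTypeFPQ (G : Type) [Group G] (n : ℕ) : Prop :=
  ∃ P : CategoryTheory.ProjectiveResolution
      (ModuleCat.of (MonoidAlgebra ℚ G) (Representation.trivial ℚ (G := G) (V := ℚ)).asModule),
    ∀ i ≤ n, Module.Finite (MonoidAlgebra ℚ G) (P.complex.X i)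

/-- The augmentation submodule of a representation: the ℚ-span of the elements
`g • m - m`. -/
def augSubmodule {G : Type} [Group G] (M : Rep.{0} ℚ G) : Submodule ℚ M :=
  Submodule.span ℚ {x : M | ∃ (g : G) (m : M), x = M.ρ g m - m}

/-- The coinvariants `H₀(G, M)` of a representation: the quotient of `M` by the
ℚ-span of the elements `g • m - m`. -/
noncomputable def coinvariants {G : Type} [Group G] (M : Rep.{0} ℚ G) : ModuleCat ℚ :=
  ModuleCat.of ℚ (M ⧸ augSubmodule M)

/-- The map on coinvariants induced by a morphism of representations. -/
noncomputable def coinvariantsMap {G : Type} [Group G] {M N : Rep.{0} ℚ G} (f : M ⟶ N) :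
    coinvariants M ⟶ coinvariants N :=
  ModuleCat.ofHom <| Submodule.mapQ (augSubmodule M) (augSubmodule N) f.hom.toLinearMap <| by
    rw [augSubmodule, Submodule.span_le]
    rintro x ⟨g, m, rfl⟩
    simp only [SetLike.mem_coe, Submodule.mem_comap, map_sub]
    exact Submodule.subset_span ⟨g, f.hom m, by
      change f.hom (M.ρ g m) - f.hom m = _; rw [Rep.hom_comm_apply f g m]⟩

/-- The coinvariants functor `Rep ℚ G ⥤ ModuleCat ℚ`. -/
noncomputable def coinvariantsFunctor (G : Type) [Group G] : Rep.{0} ℚ G ⥤ ModuleCat ℚ where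
  obj := coinvariants
  map := coinvariantsMap
  map_id _ := ModuleCat.hom_ext <| Submodule.linearMap_qext _ rfl
  map_comp _ _ := ModuleCat.hom_ext <| Submodule.linearMap_qext _ rfl

instance (G : Type) [Group G] : (coinvariantsFunctor G).Additive where
  map_add := ModuleCat.hom_ext <| Submodule.linearMap_qext _ rfl

/-- Group homology `Hₙ(G, M)` of `G` with coefficients in the `ℚG`-module `M`,
defined as the `n`-th left derived functor of the coinvariants functor applied to `M`. -/
noncomputable def QHomology (n : ℕ) (G : Type) [Group G] (M : Rep.{0} ℚ G) : ModuleCat ℚ :=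
  (((coinvariantsFunctor G).leftDerived n).obj M : ModuleCat ℚ)


section Aux

open HNNExtension

variable {G : Type} [Group G] {C C' : Subgroup G} {φ : C ≃* C'}
variable (M : Rep.{0} ℚ (HNNExtension G C C' φ))

/-- The `C`-coinvariants submodule. -/
abbrev HNNQC : Submodule ℚ M :=
  Submodule.span ℚ {x : M | ∃ (c : C) (m : M), x = M.ρ (HNNExtension.of (c : G)) m - m}

/-- The target quotient. -/
abbrev HNNQ := M ⧸ HNNQC M

/-- The linear endomorphism of `M × Q` given by the action of `γ` on the first factor. -/
noncomputable def HNNA (γ : HNNExtension G C C' φ) :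
    (M × HNNQ M) →ₗ[ℚ] (M × HNNQ M) :=
  (M.ρ γ).prodMap LinearMap.id

@[simp] lemma HNNA_apply (γ : HNNExtension G C C' φ) (v : M × HNNQ M) :
    HNNA M γ v = (M.ρ γ v.1, v.2) := rfl

/-- The "shear" endomorphism `(m, q) ↦ (m, q + [m])`. -/
noncomputable def HNNT : (M × HNNQ M) →ₗ[ℚ] (M × HNNQ M) :=
  LinearMap.prod (LinearMap.fst ℚ M (HNNQ M))
    (LinearMap.snd ℚ M (HNNQ M) + (HNNQC M).mkQ.comp (LinearMap.fst ℚ M (HNNQ M)))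

@[simp] lemma HNNT_apply (v : M × HNNQ M) :
    HNNT M v = (v.1, v.2 + (HNNQC M).mkQ v.1) := rfl

/-- The inverse shear. -/
noncomputable def HNNTinv : (M × HNNQ M) →ₗ[ℚ] (M × HNNQ M) :=
  LinearMap.prod (LinearMap.fst ℚ M (HNNQ M))
    (LinearMap.snd ℚ M (HNNQ M) - (HNNQC M).mkQ.comp (LinearMap.fst ℚ M (HNNQ M)))

@[simp] lemma HNNTinv_apply (v : M × HNNQ M) :
    HNNTinv M v = (v.1, v.2 - (HNNQC M).mkQ v.1) := rfl

/-- The `Γ`-action on the first factor, as a homomorphism into units. -/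
noncomputable def HNNAu : HNNExtension G C C' φ →* ((M × HNNQ M) →ₗ[ℚ] (M × HNNQ M))ˣ where
  toFun γ :=
    { val := HNNA M γ
      inv := HNNA M γ⁻¹
      val_inv := by
        ext v <;> simp [Module.End.mul_apply, Representation.self_inv_apply]
      inv_val := by
        ext v <;> simp [Module.End.mul_apply, Representation.inv_self_apply] }
  map_one' := by
    apply Units.ext
    ext v <;> simp
  map_mul' x y := by
    apply Units.ext
    ext v <;> simp [Module.End.mul_apply, map_mul]

/-- The shear as a unit. -/
noncomputable def HNNtu : ((M × HNNQ M) →ₗ[ℚ] (M × HNNQ M))ˣ where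
  val := HNNT M
  inv := HNNTinv M
  val_inv := by ext v <;> simp [Module.End.mul_apply]
  inv_val := by ext v <;> simp [Module.End.mul_apply]

variable (htriv : ∀ m : M, M.ρ HNNExtension.t m = m)

include htriv in
lemma HNN_rho_t_inv (x : M) : M.ρ (HNNExtension.t (φ := φ))⁻¹ x = x := by
  have h : M.ρ (HNNExtension.t (φ := φ))⁻¹ (M.ρ (HNNExtension.t (φ := φ)) x)
      = M.ρ (HNNExtension.t (φ := φ))⁻¹ x := by rw [htriv]
  rw [← h]
  exact Representation.inv_self_apply M.ρ HNNExtension.t x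

include htriv in
lemma HNN_rho_of_c (c : C) (x : M) :
    M.ρ (HNNExtension.of ((φ c : G))) x = M.ρ (HNNExtension.of (c : G)) x := by
  rw [equiv_eq_conj c]
  rw [map_mul, map_mul]
  simp only [Module.End.mul_apply]
  rw [HNN_rho_t_inv M htriv, htriv]

lemma HNN_mkQ_of_c (c : C) (x : M) :
    (HNNQC M).mkQ (M.ρ (HNNExtension.of (c : G)) x) = (HNNQC M).mkQ x := by
  rw [Submodule.mkQ_apply, Submodule.mkQ_apply, Submodule.Quotient.eq]
  exact Submodule.subset_span ⟨c, x, rfl⟩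

/-- The lifted homomorphism `Γ →* units`. -/
noncomputable def HNNPhi : HNNExtension G C C' φ →* ((M × HNNQ M) →ₗ[ℚ] (M × HNNQ M))ˣ :=
  HNNExtension.lift ((HNNAu M).comp HNNExtension.of) (HNNtu M) (by
    intro c
    apply Units.ext
    refine LinearMap.ext fun v => ?_
    show HNNT M (HNNA M (HNNExtension.of (c : G)) v)
      = HNNA M (HNNExtension.of ((φ c : G))) (HNNT M v)
    refine Prod.ext ?_ ?_
    · simp [HNN_rho_of_c M htriv c]
    · simp [HNN_mkQ_of_c M c])

/-- The representation of `Γ` on `M × Q`. -/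
noncomputable def HNNrho : Representation ℚ (HNNExtension G C C' φ) (M × HNNQ M) :=
  (Units.coeHom _).comp (HNNPhi M htriv)

@[simp] lemma HNNrho_of (g : G) : HNNrho M htriv (HNNExtension.of g) = HNNA M (HNNExtension.of g) := by
  simp only [HNNrho, HNNPhi, MonoidHom.comp_apply, HNNExtension.lift_of, Units.coeHom_apply]
  rfl

@[simp] lemma HNNrho_t : HNNrho M htriv HNNExtension.t = HNNT M := by
  simp only [HNNrho, HNNPhi, MonoidHom.comp_apply, HNNExtension.lift_t, Units.coeHom_apply]
  rfl

lemma HNNkey (γ : HNNExtension G C C' φ) :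
    (∀ v : M × HNNQ M, (HNNrho M htriv γ v).1 = M.ρ γ v.1) ∧
      (∀ q : HNNQ M, HNNrho M htriv γ ((0 : M), q) = (0, q)) := by
  induction γ using HNNExtension.induction_on with
  | of g =>
    constructor
    · intro v; rw [HNNrho_of]; simp
    · intro q; rw [HNNrho_of]; simp
  | t =>
    constructor
    · intro v; rw [HNNrho_t]; simp [htriv]
    · intro q; rw [HNNrho_t]; simp
  | mul x y hx hy =>
    constructor
    · intro v
      rw [map_mul, Module.End.mul_apply, hx.1, hy.1, map_mul, Module.End.mul_apply]
    · intro q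
      rw [map_mul, Module.End.mul_apply, hy.2, hx.2]
  | inv x hx =>
    have hinv : ∀ v : M × HNNQ M, HNNrho M htriv x (HNNrho M htriv x⁻¹ v) = v := by
      intro v
      rw [← Module.End.mul_apply, ← map_mul, mul_inv_cancel, map_one, Module.End.one_apply]
    have hinv' : ∀ v : M × HNNQ M, HNNrho M htriv x⁻¹ (HNNrho M htriv x v) = v := by
      intro v
      rw [← Module.End.mul_apply, ← map_mul, inv_mul_cancel, map_one, Module.End.one_apply]
    constructor
    · intro v
      have h1 := hx.1 (HNNrho M htriv x⁻¹ v)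
      rw [hinv v] at h1
      have h3 := congrArg (M.ρ x⁻¹) h1
      rw [Representation.inv_self_apply] at h3
      exact h3.symm
    · intro q
      have h2 := hx.2 q
      have h3 := congrArg (HNNrho M htriv x⁻¹) h2
      rw [hinv' ((0 : M), q)] at h3
      exact h3.symm

/-- The extension representation as an object of `Rep ℚ Γ`. -/
noncomputable def HNNE : Rep.{0} ℚ (HNNExtension G C C' φ) := Rep.of (HNNrho M htriv)

/-- Projection `E ⟶ M` as a morphism of representations. -/
noncomputable def HNNpr : HNNE M htriv ⟶ M :=
  ConcreteCategory.ofHom (C := Rep.{0} ℚ (HNNExtension G C C' φ))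
    ⟨LinearMap.fst ℚ M (HNNQ M), fun γ => LinearMap.ext fun v => (HNNkey M htriv γ).1 v⟩

instance : Epi (HNNpr M htriv) := by
  apply (forget₂ (Rep ℚ (HNNExtension G C C' φ)) (ModuleCat ℚ)).epi_of_epi_map
  rw [ModuleCat.epi_iff_surjective]
  exact fun m => ⟨((m : M), (0 : HNNQ M)), rfl⟩

end Aux


/-- **Lemma 3.1 (Fox calculus)** Let `Γ = G ∗_C` be an HNN extension with stable letter
`t`, and let `M` be a `ℚΓ`-module on which `t` acts trivially.  Then `H₁(Γ, M)`
contains a subgroup that admits an epimorphism onto `H₀(C, M)`. -/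
theorem H1_of_HNN_surjects_onto_coinvariants
    (G : Type) [Group G] (C C' : Subgroup G) (φ : C ≃* C')
    (M : Rep.{0} ℚ (HNNExtension G C C' φ))
    (htriv : ∀ m : M, M.ρ HNNExtension.t m = m) :
    ∃ (W : Submodule ℚ (QHomology 1 (HNNExtension G C C' φ) M))
      (f : W →ₗ[ℚ] (M ⧸ Submodule.span ℚ
        {x : M | ∃ (c : C) (m : M), x = M.ρ (HNNExtension.of (c : G)) m - m})),
      Function.Surjective f := by
  classical
  set Γt := HNNExtension G C C' φ with hΓt
  let F := coinvariantsFunctor Γt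
  let P : ProjectiveResolution M := ProjectiveResolution.of M
  let K := (F.mapHomologicalComplex (ComplexShape.down ℕ)).obj P.complex
  let SK := K.sc' 2 1 0
  -- the augmented map to M
  let isoM := HomologicalComplex.singleObjXSelf (ComplexShape.down ℕ) 0 M
  let π0 : P.complex.X 0 ⟶ M := P.π.f 0 ≫ isoM.hom
  have hdπ0 : P.complex.d 1 0 ≫ π0 = 0 := by
    rw [show P.complex.d 1 0 ≫ π0 = (P.complex.d 1 0 ≫ P.π.f 0) ≫ isoM.hom from
      (CategoryTheory.Category.assoc _ _ _).symm, P.complex_d_comp_π_f_zero,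
      CategoryTheory.Limits.zero_comp]
  haveI : Epi π0 := epi_comp _ _
  -- lift through the extension
  let σ : P.complex.X 0 ⟶ HNNE M htriv := Projective.factorThru π0 (HNNpr M htriv)
  have hσ : σ ≫ HNNpr M htriv = π0 := Projective.factorThru_comp _ _
  have hσ' : ∀ x : P.complex.X 0,
      ((σ.hom x : M × HNNQ M)).1 = π0.hom x := by
    intro x
    have := congrArg Rep.Hom.hom hσ
    exact congrFun (congrArg _root_.DFunLike.coe this) x
  have hσcomm : ∀ (γ : Γt) (x : P.complex.X 0),
      σ.hom ((P.complex.X 0).ρ γ x) = HNNrho M htriv γ (σ.hom x) :=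
    fun γ x => Rep.hom_comm_apply σ γ x
  -- the Fox-derivative linear map on P₁
  let τlin : (P.complex.X 1 : Type) →ₗ[ℚ] HNNQ M :=
    (LinearMap.snd ℚ M (HNNQ M)).comp
      ((σ.hom.toLinearMap : (P.complex.X 0 : Type) →ₗ[ℚ] (M × HNNQ M)).comp
        ((P.complex.d 1 0).hom.toLinearMap : (P.complex.X 1 : Type) →ₗ[ℚ] (P.complex.X 0 : Type)))
  have hτlin : ∀ p : P.complex.X 1, τlin p = (σ.hom ((P.complex.d 1 0).hom p)).2 := fun _ => rfl
  have hfst : ∀ p : P.complex.X 1, ((σ.hom ((P.complex.d 1 0).hom p) : M × HNNQ M)).1 = 0 := by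
    intro p
    rw [hσ' _]
    have h := congrArg Rep.Hom.hom hdπ0
    rw [Rep.hom_comp, Rep.zero_hom] at h
    have h2 := congrFun (congrArg _root_.DFunLike.coe h) p
    simpa using h2
  have hτd : ∀ p : P.complex.X 1,
      σ.hom ((P.complex.d 1 0).hom p) = (0, τlin p) := by
    intro p
    exact Prod.ext (hfst p) rfl
  have hτaug : augSubmodule (P.complex.X 1) ≤ LinearMap.ker τlin := by
    rw [augSubmodule, Submodule.span_le]
    rintro x ⟨γ, p, rfl⟩
    simp only [SetLike.mem_coe, LinearMap.mem_ker, map_sub]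
    have h1 : (P.complex.d 1 0).hom ((P.complex.X 1).ρ γ p)
        = (P.complex.X 0).ρ γ ((P.complex.d 1 0).hom p) :=
      Rep.hom_comm_apply (P.complex.d 1 0) γ p
    rw [hτlin, hτlin, h1, hσcomm γ, hτd p, (HNNkey M htriv γ).2 (τlin p)]
    exact sub_self _
  -- the induced map on coinvariants of P₁
  let ψ : ((P.complex.X 1 : Type) ⧸ augSubmodule (P.complex.X 1)) →ₗ[ℚ] HNNQ M :=
    Submodule.liftQ _ τlin hτaug
  have hψmk : ∀ p : P.complex.X 1, ψ (Submodule.Quotient.mk p) = τlin p := fun _ => rfl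
  have hψd : ∀ x : ((P.complex.X 2 : Type) ⧸ augSubmodule (P.complex.X 2)),
      ψ ((coinvariantsMap (P.complex.d 2 1)).hom x) = 0 := by
    intro x
    obtain ⟨p, rfl⟩ := Submodule.Quotient.mk_surjective _ x
    rw [show (coinvariantsMap (P.complex.d 2 1)).hom (Submodule.Quotient.mk p)
        = Submodule.Quotient.mk ((P.complex.d 2 1).hom p) from rfl]
    rw [hψmk, hτlin]
    have hd : (P.complex.d 1 0).hom ((P.complex.d 2 1).hom p) = 0 := by
      have h := congrArg Rep.Hom.hom (P.complex.d_comp_d 2 1 0)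
      rw [Rep.hom_comp, Rep.zero_hom] at h
      have h2 := congrFun (congrArg _root_.DFunLike.coe h) p
      simpa using h2
    rw [hd]
    simp; rfl
  -- the map on concrete homology
  have hker : LinearMap.range SK.moduleCatToCycles ≤
      LinearMap.ker (ψ.comp (LinearMap.ker SK.g.hom).subtype) := by
    rintro _ ⟨x, rfl⟩
    simp only [LinearMap.mem_ker, LinearMap.comp_apply, Submodule.subtype_apply]
    exact hψd x
  let hmap : (SK.moduleCatLeftHomologyData.H : Type) →ₗ[ℚ] HNNQ M :=
    Submodule.liftQ _ (ψ.comp (LinearMap.ker SK.g.hom).subtype) hker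
  -- surjectivity of hmap
  have hπ0surj : ∀ m' : M, ∃ p₀ : (P.complex.X 0 : Type), π0.hom p₀ = m' := by
    have hepi : Epi ((forget₂ (Rep.{0} ℚ Γt) (ModuleCat ℚ)).map π0) :=
      (forget₂ (Rep.{0} ℚ Γt) (ModuleCat ℚ)).map_epi π0
    have hs := (ModuleCat.epi_iff_surjective ((forget₂ (Rep.{0} ℚ Γt) (ModuleCat ℚ)).map π0)).1 hepi
    intro m'
    obtain ⟨p, hp⟩ := hs m'
    exact ⟨p, hp⟩
  have hexact := P.exact₀.map (forget₂ (Rep.{0} ℚ Γt) (ModuleCat ℚ))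
  have hmap_surj : Function.Surjective hmap := by
    intro q
    obtain ⟨m, rfl⟩ := Submodule.Quotient.mk_surjective _ q
    obtain ⟨p₀, hp₀⟩ := hπ0surj m
    set y : (P.complex.X 0 : Type) := (P.complex.X 0).ρ HNNExtension.t p₀ - p₀ with hydef
    have hy0 : π0.hom y = 0 := by
      rw [hydef, map_sub, Rep.hom_comm_apply π0 HNNExtension.t p₀, hp₀, htriv m, sub_self]
    have hy : (P.π.f 0).hom y = 0 := by
      have h1 : isoM.hom.hom ((P.π.f 0).hom y) = 0 := by
        have : π0.hom y = isoM.hom.hom ((P.π.f 0).hom y) := rfl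
        rw [← this, hy0]
      have h2 := congrArg isoM.inv.hom h1
      have h3 : ∀ z, isoM.inv.hom (isoM.hom.hom z) = z := by
        intro z
        have := congrArg Rep.Hom.hom isoM.hom_inv_id
        exact congrFun (congrArg _root_.DFunLike.coe this) z
      rw [h3, map_zero] at h2
      exact h2
    obtain ⟨(p₁ : (P.complex.X 1 : Type)), hp₁⟩ := (ShortComplex.moduleCat_exact_iff _).1 hexact y hy
    have hp₁' : (P.complex.d 1 0).hom p₁ = y := hp₁
    -- the cycle
    have hz : SK.g.hom (Submodule.Quotient.mk p₁) = 0 := by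
      rw [show SK.g.hom (Submodule.Quotient.mk p₁)
          = Submodule.Quotient.mk ((P.complex.d 1 0).hom p₁) from rfl]
      change (Submodule.Quotient.mk ((P.complex.d 1 0).hom p₁) :
        (P.complex.X 0 : Type) ⧸ augSubmodule (P.complex.X 0)) = 0
      rw [hp₁', Submodule.Quotient.mk_eq_zero]
      exact Submodule.subset_span ⟨HNNExtension.t, p₀, hydef⟩
    refine ⟨Submodule.Quotient.mk (⟨Submodule.Quotient.mk p₁, hz⟩ : LinearMap.ker SK.g.hom), ?_⟩
    have : hmap (Submodule.Quotient.mk (⟨Submodule.Quotient.mk p₁, hz⟩ : LinearMap.ker SK.g.hom))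
        = τlin p₁ := rfl
    rw [this, hτlin, hp₁', hydef, map_sub, hσcomm HNNExtension.t p₀, HNNrho_t]
    have hfst0 : ((σ.hom p₀ : M × HNNQ M)).1 = m := by rw [hσ' p₀, hp₀]
    show ((σ.hom p₀ : M × HNNQ M).2 + (HNNQC M).mkQ (σ.hom p₀ : M × HNNQ M).1)
        - (σ.hom p₀ : M × HNNQ M).2 = Submodule.Quotient.mk m
    rw [add_sub_cancel_left, hfst0]
    rfl
  -- assemble via the isomorphisms computing the derived functor
  let e1 := P.isoLeftDerivedObj F 1
  let e2 := K.homologyIsoSc' 2 1 0 (by simp) (by simp)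
  let e3 := SK.moduleCatLeftHomologyData.homologyIso
  let ftot : (QHomology 1 Γt M : Type) →ₗ[ℚ] HNNQ M :=
    hmap.comp (e3.hom.hom.comp (e2.hom.hom.comp e1.hom.hom))
  refine ⟨⊤, ftot.comp (Submodule.subtype ⊤), ?_⟩
  have hsub : Function.Surjective (Submodule.subtype (⊤ : Submodule ℚ (QHomology 1 Γt M))) :=
    fun x => ⟨⟨x, trivial⟩, rfl⟩
  have he1 : Function.Surjective e1.hom.hom :=
    (ModuleCat.epi_iff_surjective e1.hom).1 inferInstance
  have he2 : Function.Surjective e2.hom.hom :=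
    (ModuleCat.epi_iff_surjective e2.hom).1 inferInstance
  have he3 : Function.Surjective e3.hom.hom :=
    (ModuleCat.epi_iff_surjective e3.hom).1 inferInstance
  exact hmap_surj.comp (he3.comp (he2.comp (he1.comp hsub)))
end
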